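/- Let A be the Tutte matrix of a graph G and I ⊆ V. If the rows of A indexed by I form a row basis, then the principal submatrix A_{I,I} is nonsingular. -/

import Mathlib

/-- The Tutte matrix of a graph `G`, over the field of rational functions in the
indeterminates `x_{uv}`, one for each unordered pair: `A u v = x_{uv}` if `u < v` are
adjacent, `A u v = -x_{uv}` if `v < u` are adjacent, and `0` otherwise. -/
noncomputable def tutteMatrix {V : Type*} [Fintype V] [LinearOrder V]
    (G : SimpleGraph V) [DecidableRel G.Adj] :
    Matrix V V (FractionRing (MvPolynomial (Sym2 V) ℚ)) :=
  Matrix.of fun u v =>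
    if G.Adj u v then
      if u < v then
        algebraMap (MvPolynomial (Sym2 V) ℚ) (FractionRing (MvPolynomial (Sym2 V) ℚ))
          (MvPolynomial.X s(u, v))
      else
        - algebraMap (MvPolynomial (Sym2 V) ℚ) (FractionRing (MvPolynomial (Sym2 V) ℚ))
          (MvPolynomial.X s(u, v))
    else 0

lemma tutteMatrix_skew {V : Type*} [Fintype V] [LinearOrder V]
    (G : SimpleGraph V) [DecidableRel G.Adj] (u v : V) :
    tutteMatrix G u v = - tutteMatrix G v u := by
  unfold tutteMatrix
  simp only [Matrix.of_apply]
  by_cases h : G.Adj u v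
  · have h' : G.Adj v u := h.symm
    have hne : u ≠ v := h.ne
    rcases hne.lt_or_gt with hlt | hgt
    · simp [h, h', hlt, not_lt.mpr hlt.le, Sym2.eq_swap]
    · simp [h, h', hgt, not_lt.mpr hgt.le, Sym2.eq_swap]
  · have h' : ¬ G.Adj v u := fun h' => h h'.symm
    simp [h, h']

/-- If the rows of the Tutte matrix of `G` indexed by `I` form a row basis (they are
linearly independent and span the row space), then the principal submatrix `A_{I,I}` is
nonsingular. -/
theorem tutte_principal_submatrix_nonsingular {V : Type*} [Fintype V] [LinearOrder V]
    (G : SimpleGraph V) [DecidableRel G.Adj] (I : Finset V)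
    (hindep : LinearIndependent (FractionRing (MvPolynomial (Sym2 V) ℚ))
        fun i : {x // x ∈ I} => tutteMatrix G (i : V))
    (hspan : Submodule.span (FractionRing (MvPolynomial (Sym2 V) ℚ)) (tutteMatrix G '' ↑I) =
        Submodule.span (FractionRing (MvPolynomial (Sym2 V) ℚ))
          (Set.range (tutteMatrix G))) :
    ((tutteMatrix G).submatrix (fun i : {x // x ∈ I} => (i : V))
      (fun i : {x // x ∈ I} => (i : V))).det ≠ 0 := by
  classical
  set K := FractionRing (MvPolynomial (Sym2 V) ℚ) with hK
  set A := tutteMatrix G with hA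
  have skew : ∀ u v : V, A u v = - A v u := tutteMatrix_skew G
  intro hdet
  obtain ⟨c, hc0, hc⟩ := (Matrix.exists_vecMul_eq_zero_iff).2 hdet
  set w : V → K := fun j => ∑ i : {x // x ∈ I}, c i * A (i : V) j with hw
  have hwI : ∀ k : {x // x ∈ I}, w (k : V) = 0 := by
    intro k
    have := congrFun hc k
    simpa [Matrix.vecMul, dotProduct, Matrix.submatrix, hw] using this
  have hwI' : ∀ k : {x // x ∈ I}, ∑ i : {x // x ∈ I}, c i * A (k : V) (i : V) = 0 := by
    intro k
    have : ∑ i : {x // x ∈ I}, c i * A (k : V) (i : V)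
        = - ∑ i : {x // x ∈ I}, c i * A (i : V) (k : V) := by
      rw [← Finset.sum_neg_distrib]
      refine Finset.sum_congr rfl fun i _ => ?_
      rw [skew (k : V) (i : V)]; ring
    rw [this, show (∑ i : {x // x ∈ I}, c i * A (i : V) (k : V)) = w (k : V) from rfl,
      hwI k, neg_zero]
  have hwall : ∀ j : V, w j = 0 := by
    intro j
    have hmem : A j ∈ Submodule.span K (A '' ↑I) := by
      rw [hspan]; exact Submodule.subset_span (Set.mem_range_self j)
    rw [show (A '' ↑I) = Set.range (fun i : {x // x ∈ I} => A (i : V)) from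
      (Set.image_eq_range _ _)] at hmem
    obtain ⟨d, hd⟩ := (Submodule.mem_span_range_iff_exists_fun K).1 hmem
    have hAj : ∀ v : V, A j v = ∑ k : {x // x ∈ I}, d k * A (k : V) v := by
      intro v
      have := congrFun hd v
      simpa [Finset.sum_apply, Pi.smul_apply, smul_eq_mul] using this.symm
    calc w j = ∑ i : {x // x ∈ I}, -(c i * A j (i : V)) := by
          refine Finset.sum_congr rfl fun i _ => ?_
          rw [skew (i : V) j]; ring
      _ = - ∑ i : {x // x ∈ I}, c i * A j (i : V) := by
          rw [Finset.sum_neg_distrib]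
      _ = - ∑ i : {x // x ∈ I}, c i * ∑ k : {x // x ∈ I}, d k * A (k : V) (i : V) := by
          simp_rw [hAj]
      _ = - ∑ k : {x // x ∈ I}, d k * ∑ i : {x // x ∈ I}, c i * A (k : V) (i : V) := by
          congr 1
          simp_rw [Finset.mul_sum]
          rw [Finset.sum_comm]
          refine Finset.sum_congr rfl fun k _ => ?_
          rw [Finset.mul_sum]
          refine Finset.sum_congr rfl fun i _ => ?_
          ring
      _ = 0 := by simp [← Finset.univ_eq_attach, hwI']
  apply hc0
  have hzero : ∑ i : {x // x ∈ I}, c i • A (i : V) = 0 := by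
    funext v
    have := hwall v
    simpa [Finset.sum_apply, Pi.smul_apply, smul_eq_mul, hw] using this
  funext i
  exact Fintype.linearIndependent_iff.1 hindep c hzero i
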